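/- arXiv:1505.04129 — 2 statements merged into one kernel-verified Lean document; each statement's English description precedes it below -/
import Mathlib

section
/- Suppose X has dimension 2. Let A and B be nonempty closed convex subsets of X, set T := P_B ∘ P_A, and suppose T has no fixed point. Then for every x ∈ X the sequence (Tⁿx/‖Tⁿx‖) (eventually well defined) converges. -/
open Filter Topology

/-- `P` is the projector onto the set `C`: `P x` is a point of `C` nearest to `x`. -/
def IsProjector {X : Type*} [NormedAddCommGroup X] [InnerProductSpace ℝ X]
    (C : Set X) (P : X → X) : Prop :=
  ∀ x : X, P x ∈ C ∧ ∀ y ∈ C, ‖x - P x‖ ≤ ‖x - y‖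

section Aux
variable {X : Type*} [NormedAddCommGroup X] [InnerProductSpace ℝ X]
open scoped RealInnerProductSpace

lemma isproj_inner_le {C : Set X} {P : X → X} (hP : IsProjector C P)
    (hconv : Convex ℝ C) (x : X) {y : X} (hy : y ∈ C) :
    ⟪x - P x, y - P x⟫ ≤ 0 := by
  by_contra h
  push_neg at h
  set p := x - P x with hp
  set d := y - P x with hd
  have hI : (0:ℝ) < ⟪p, d⟫ := h
  set t : ℝ := min 1 (⟪p, d⟫ / (‖d‖ ^ 2 + 1)) with htdef
  have ht0 : 0 < t := lt_min one_pos (div_pos hI (by positivity))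
  have ht1 : t ≤ 1 := min_le_left _ _
  have hz : P x + t • d ∈ C := by
    have hmem := hconv (hP x).1 hy (by linarith : (0:ℝ) ≤ 1 - t) ht0.le (by ring)
    have : P x + t • d = (1 - t) • P x + t • y := by rw [hd]; module
    rw [this]; exact hmem
  have hle : ‖p‖ ≤ ‖p - t • d‖ := by
    have := (hP x).2 _ hz
    have hx2 : x - (P x + t • d) = p - t • d := by rw [hp]; abel
    rw [hx2] at this
    exact this
  have hsq : ‖p‖ ^ 2 ≤ ‖p - t • d‖ ^ 2 := by
    gcongr

  have hexp : ‖p - t • d‖ ^ 2 = ‖p‖ ^ 2 - 2 * (t * ⟪p, d⟫) + t ^ 2 * ‖d‖ ^ 2 := by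
    rw [norm_sub_sq_real, real_inner_smul_right, norm_smul]
    simp [abs_of_pos ht0]; ring
  rw [hexp] at hsq
  have key : 2 * ⟪p, d⟫ ≤ t * ‖d‖ ^ 2 := by
    have h2 : 2 * (t * ⟪p, d⟫) ≤ t ^ 2 * ‖d‖ ^ 2 := by linarith
    nlinarith
  have hmin : t ≤ ⟪p, d⟫ / (‖d‖ ^ 2 + 1) := min_le_right _ _
  have hmul : t * (‖d‖ ^ 2 + 1) ≤ ⟪p, d⟫ :=
    (le_div_iff₀ (by positivity)).mp hmin
  have hexp2 : t * (‖d‖ ^ 2 + 1) = t * ‖d‖ ^ 2 + t := by ring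
  linarith

lemma isproj_norm_le {C : Set X} {P : X → X} (hP : IsProjector C P)
    (hconv : Convex ℝ C) (x y : X) : ‖P x - P y‖ ≤ ‖x - y‖ := by
  have h1 : ⟪x - P x, P y - P x⟫ ≤ 0 := isproj_inner_le hP hconv x (hP y).1
  have h2 : ⟪y - P y, P x - P y⟫ ≤ 0 := isproj_inner_le hP hconv y (hP x).1
  have e : ⟪x - y, P x - P y⟫ =
      ⟪x - P x, P x - P y⟫ + ⟪P x - P y, P x - P y⟫ + ⟪P y - y, P x - P y⟫ := by
    rw [← inner_add_left, ← inner_add_left]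
    congr 1
    abel
  have e1 : ⟪x - P x, P x - P y⟫ = -⟪x - P x, P y - P x⟫ := by
    rw [← inner_neg_right]
    congr 1
    abel
  have e2 : ⟪P y - y, P x - P y⟫ = -⟪y - P y, P x - P y⟫ := by
    rw [← inner_neg_left]
    congr 1
    abel
  have e3 : ⟪P x - P y, P x - P y⟫ = ‖P x - P y‖ ^ 2 := real_inner_self_eq_norm_sq _
  have key : ‖P x - P y‖ ^ 2 ≤ ⟪x - y, P x - P y⟫ := by
    rw [e, e1, e2, e3]; linarith
  have hc := real_inner_le_norm (x - y) (P x - P y)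
  nlinarith [norm_nonneg (P x - P y), norm_nonneg (x - y)]

lemma isproj_continuous {C : Set X} {P : X → X} (hP : IsProjector C P)
    (hconv : Convex ℝ C) : Continuous P := by
  have : LipschitzWith 1 P := by
    apply LipschitzWith.of_dist_le_mul
    intro x y
    rw [dist_eq_norm, dist_eq_norm, NNReal.coe_one, one_mul]
    exact isproj_norm_le hP hconv x y
  exact this.continuous

lemma normalize_sub_le (x y : X) (hx : x ≠ 0) (hy : y ≠ 0) :
    ‖‖x‖⁻¹ • x - ‖y‖⁻¹ • y‖ ≤ 2 * ‖x - y‖ / ‖x‖ := by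
  have hx0 : (0:ℝ) < ‖x‖ := norm_pos_iff.mpr hx
  have hy0 : (0:ℝ) < ‖y‖ := norm_pos_iff.mpr hy
  have e : ‖x‖⁻¹ • x - ‖y‖⁻¹ • y = ‖x‖⁻¹ • (x - y) + (‖x‖⁻¹ - ‖y‖⁻¹) • y := by
    rw [smul_sub, sub_smul]; abel
  rw [e]
  have h1 : ‖‖x‖⁻¹ • (x - y)‖ = ‖x - y‖ / ‖x‖ := by
    rw [norm_smul, norm_inv, norm_norm]; ring
  have hineq : |‖y‖ - ‖x‖| ≤ ‖x - y‖ := by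
    rw [abs_sub_comm]
    exact abs_norm_sub_norm_le x y
  have h2 : ‖(‖x‖⁻¹ - ‖y‖⁻¹) • y‖ ≤ ‖x - y‖ / ‖x‖ := by
    rw [norm_smul, Real.norm_eq_abs]
    have e3 : ‖x‖⁻¹ - ‖y‖⁻¹ = (‖y‖ - ‖x‖) / (‖x‖ * ‖y‖) := by
      field_simp
    rw [e3, abs_div, abs_of_pos (mul_pos hx0 hy0)]
    have e4 : |‖y‖ - ‖x‖| / (‖x‖ * ‖y‖) * ‖y‖ = |‖y‖ - ‖x‖| / ‖x‖ := by
      field_simp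
    rw [e4]
    gcongr
  calc ‖‖x‖⁻¹ • (x - y) + (‖x‖⁻¹ - ‖y‖⁻¹) • y‖
      ≤ ‖‖x‖⁻¹ • (x - y)‖ + ‖(‖x‖⁻¹ - ‖y‖⁻¹) • y‖ := norm_add_le _ _
    _ ≤ ‖x - y‖ / ‖x‖ + ‖x - y‖ / ‖x‖ := by rw [h1]; linarith [h2]
    _ = 2 * ‖x - y‖ / ‖x‖ := by ring


variable {X : Type*} [NormedAddCommGroup X] [InnerProductSpace ℝ X]

lemma recession_dir {C : Set X} (hcl : IsClosed C) (hconv : Convex ℝ C)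
    {z : ℕ → X} (hz : ∀ n, z n ∈ C)
    (hnorm : Tendsto (fun n => ‖z n‖) atTop atTop)
    {w : X} (hw : Tendsto (fun n => ‖z n‖⁻¹ • z n) atTop (nhds w))
    {c : X} (hc : c ∈ C) {t : ℝ} (ht : 0 ≤ t) : c + t • w ∈ C := by
  set lam : ℕ → ℝ := fun n => t * ‖z n‖⁻¹ with hlam
  have hinv : Tendsto (fun n => ‖z n‖⁻¹) atTop (nhds 0) :=
    tendsto_inv_atTop_zero.comp hnorm
  have hlam0 : Tendsto lam atTop (nhds 0) := by
    have := hinv.const_mul t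
    simpa using this
  set y : ℕ → X := fun n => c + t • (‖z n‖⁻¹ • z n) - lam n • c with hy
  have hyt : Tendsto y atTop (nhds (c + t • w)) := by
    have h1 : Tendsto (fun n => c + t • (‖z n‖⁻¹ • z n)) atTop (nhds (c + t • w)) :=
      (hw.const_smul t).const_add c
    have h2 : Tendsto (fun n => lam n • c) atTop (nhds 0) := by
      have := hlam0.smul_const c
      simpa using this
    simpa using h1.sub h2
  apply hcl.mem_of_tendsto hyt
  have hev : ∀ᶠ n in atTop, max 1 t ≤ ‖z n‖ := hnorm.eventually_ge_atTop _
  filter_upwards [hev] with n hn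
  have hz0 : (0:ℝ) < ‖z n‖ := lt_of_lt_of_le (by positivity) hn
  have hl0 : 0 ≤ lam n := by
    have : 0 ≤ ‖z n‖⁻¹ := inv_nonneg.mpr hz0.le
    exact mul_nonneg ht this
  have hl1 : lam n ≤ 1 := by
    rw [hlam]
    have : t ≤ ‖z n‖ := le_trans (le_max_right _ _) hn
    rw [mul_inv_le_iff₀ hz0, one_mul]
    exact this
  have hmem := hconv hc (hz n) (by linarith : (0:ℝ) ≤ 1 - lam n) hl0 (by ring)
  have : y n = (1 - lam n) • c + lam n • z n := by
    rw [hy]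
    simp only []
    have : lam n • z n = t • (‖z n‖⁻¹ • z n) := by
      rw [hlam, smul_smul]
    rw [← this]
    module
  rw [this]
  exact hmem

lemma cones_intersect {X : Type*} [NormedAddCommGroup X] [InnerProductSpace ℝ X]
    [FiniteDimensional ℝ X] (hdim : Module.finrank ℝ X = 2)
    {A B : Set X} (hAne : A.Nonempty) (hBne : B.Nonempty)
    {w₁ w₂ : X} (h1 : ‖w₁‖ = 1) (h2 : ‖w₂‖ = 1)
    (hne : w₁ ≠ w₂) (hne' : w₁ ≠ -w₂)
    (recA1 : ∀ c ∈ A, ∀ t : ℝ, 0 ≤ t → c + t • w₁ ∈ A)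
    (recA2 : ∀ c ∈ A, ∀ t : ℝ, 0 ≤ t → c + t • w₂ ∈ A)
    (recB1 : ∀ c ∈ B, ∀ t : ℝ, 0 ≤ t → c + t • w₁ ∈ B)
    (recB2 : ∀ c ∈ B, ∀ t : ℝ, 0 ≤ t → c + t • w₂ ∈ B) :
    (A ∩ B).Nonempty := by
  have hind : LinearIndependent ℝ ![w₁, w₂] := by
    rw [linearIndependent_fin2]
    constructor
    · simp only [Matrix.cons_val_one, Matrix.head_cons]
      intro h; simp only [Matrix.cons_val_zero] at h; rw [h] at h2; simp at h2
    · intro a ha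
      simp only [Matrix.cons_val_one, Matrix.head_cons, Matrix.cons_val_zero] at ha
      have : |a| = 1 := by
        have := congrArg norm ha
        rw [norm_smul, h2, h1, Real.norm_eq_abs, mul_one] at this
        exact this
      rcases abs_eq (by norm_num : (0:ℝ) ≤ 1) |>.mp this with rfl | rfl
      · rw [one_smul] at ha; exact hne ha.symm
      · rw [neg_one_smul] at ha; exact hne' ha.symm
  have hcard : Fintype.card (Fin 2) = Module.finrank ℝ X := by simp [hdim]
  let bas := basisOfLinearIndependentOfCardEqFinrank hind hcard
  obtain ⟨a0, ha0⟩ := hAne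
  obtain ⟨b0, hb0⟩ := hBne
  set v := b0 - a0 with hv
  have hrepr : bas.repr v 0 • w₁ + bas.repr v 1 • w₂ = v := by
    have := bas.sum_repr v
    rw [Fin.sum_univ_two] at this
    have hb0' : bas 0 = w₁ := by
      rw [coe_basisOfLinearIndependentOfCardEqFinrank]; rfl
    have hb1' : bas 1 = w₂ := by
      rw [coe_basisOfLinearIndependentOfCardEqFinrank]; rfl
    rwa [hb0', hb1'] at this
  set c₀ := bas.repr v 0
  set c₁ := bas.repr v 1
  set s₁ := max c₀ 0
  set s₂ := max (-c₀) 0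
  set t₁ := max c₁ 0
  set t₂ := max (-c₁) 0
  have hs : s₁ = c₀ + s₂ := by
    rcases le_total c₀ 0 with h | h
    · simp [s₁, s₂, max_eq_right h, max_eq_left (neg_nonneg.mpr h)]
    · simp [s₁, s₂, max_eq_left h, max_eq_right (neg_nonpos.mpr h)]
  have ht : t₁ = c₁ + t₂ := by
    rcases le_total c₁ 0 with h | h
    · simp [t₁, t₂, max_eq_right h, max_eq_left (neg_nonneg.mpr h)]
    · simp [t₁, t₂, max_eq_left h, max_eq_right (neg_nonpos.mpr h)]
  have hzA : a0 + s₁ • w₁ + t₁ • w₂ ∈ A := by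
    have h1' : a0 + s₁ • w₁ ∈ A := recA1 a0 ha0 s₁ (le_max_right _ _)
    exact recA2 _ h1' t₁ (le_max_right _ _)
  have hzB : b0 + s₂ • w₁ + t₂ • w₂ ∈ B := by
    have h1' : b0 + s₂ • w₁ ∈ B := recB1 b0 hb0 s₂ (le_max_right _ _)
    exact recB2 _ h1' t₂ (le_max_right _ _)
  have heq : a0 + s₁ • w₁ + t₁ • w₂ = b0 + s₂ • w₁ + t₂ • w₂ := by
    rw [hs, ht]
    have : v = c₀ • w₁ + c₁ • w₂ := hrepr.symm
    rw [hv] at this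
    have hb0eq : b0 = a0 + c₀ • w₁ + c₁ • w₂ := by
      have := this
      rw [sub_eq_iff_eq_add] at this
      rw [this]; abel
    rw [hb0eq]
    module
  exact ⟨_, hzA, heq ▸ hzB⟩
end Aux

/-- In dimension `2`, for fixed-point free `T = P_B ∘ P_A` the
normalized iterates `Tⁿx/‖Tⁿx‖` converge for every `x`. -/
theorem stmt14 {X : Type*} [NormedAddCommGroup X] [InnerProductSpace ℝ X]
    [FiniteDimensional ℝ X] (hdim : Module.finrank ℝ X = 2)
    (A B : Set X) (hAne : A.Nonempty) (hAcl : IsClosed A) (hAconv : Convex ℝ A)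
    (hBne : B.Nonempty) (hBcl : IsClosed B) (hBconv : Convex ℝ B)
    (PA PB : X → X) (hPA : IsProjector A PA) (hPB : IsProjector B PB)
    (T : X → X) (hT : T = PB ∘ PA) (hfix : ∀ x : X, T x ≠ x) :
    ∀ x : X, ∃ q : X,
      Tendsto (fun n : ℕ => ‖T^[n] x‖⁻¹ • T^[n] x) atTop (nhds q) := by
  intro x
  classical
  have hTcont : Continuous T := by
    rw [hT]
    exact (isproj_continuous hPB hBconv).comp (isproj_continuous hPA hAconv)
  have hTB : ∀ y, T y ∈ B := by intro y; rw [hT]; exact (hPB (PA y)).1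
  -- the fixed-point-free property rules out points of A ∩ B
  have hABempty : ∀ w₁ w₂ : X, ‖w₁‖ = 1 → ‖w₂‖ = 1 → w₁ ≠ w₂ → w₁ ≠ -w₂ →
      (∀ c ∈ A, ∀ t : ℝ, 0 ≤ t → c + t • w₁ ∈ A) →
      (∀ c ∈ A, ∀ t : ℝ, 0 ≤ t → c + t • w₂ ∈ A) →
      (∀ c ∈ B, ∀ t : ℝ, 0 ≤ t → c + t • w₁ ∈ B) →
      (∀ c ∈ B, ∀ t : ℝ, 0 ≤ t → c + t • w₂ ∈ B) → False := by
    intro w₁ w₂ h1 h2 hne hne' rA1 rA2 rB1 rB2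
    obtain ⟨z, hzA, hzB⟩ := cones_intersect hdim hAne hBne h1 h2 hne hne' rA1 rA2 rB1 rB2
    have hPAz : PA z = z := by
      have h := (hPA z).2 z hzA
      simp only [sub_self, norm_zero] at h
      have := norm_le_zero_iff.mp h
      rw [sub_eq_zero] at this
      exact this.symm
    have hPBz : PB z = z := by
      have h := (hPB z).2 z hzB
      simp only [sub_self, norm_zero] at h
      have := norm_le_zero_iff.mp h
      rw [sub_eq_zero] at this
      exact this.symm
    have : T z = z := by rw [hT]; simp only [Function.comp_apply, hPAz, hPBz]
    exact hfix z this
  set b : ℕ → X := fun n => T^[n] (T x) with hbdef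
  have hbB : ∀ n, b n ∈ B := by
    intro n
    have h : b n = T (T^[n] x) := by
      rw [hbdef]
      simp only []
      rw [← Function.iterate_succ_apply, Function.iterate_succ_apply']
    rw [h]; exact hTB _
  have hbsucc : ∀ n, b (n + 1) = T (b n) := by
    intro n; exact Function.iterate_succ_apply' T n (T x)
  set a : ℕ → X := fun n => PA (b n) with hadef
  have haA : ∀ n, a n ∈ A := fun n => (hPA (b n)).1
  set e : ℕ → X := fun n => b n - a n with hedef
  set f : ℕ → X := fun n => b (n + 1) - a n with hfdef
  have hbPB : ∀ n, b (n + 1) = PB (a n) := by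
    intro n; rw [hbsucc n, hT]; rfl
  have hfe : ∀ n, ‖f n‖ ≤ ‖e n‖ := by
    intro n
    have h := (hPB (a n)).2 (b n) (hbB n)
    rw [← hbPB n] at h
    calc ‖f n‖ = ‖a n - b (n + 1)‖ := norm_sub_rev _ _
      _ ≤ ‖a n - b n‖ := h
      _ = ‖e n‖ := norm_sub_rev _ _
  have hef : ∀ n, ‖e (n + 1)‖ ≤ ‖f n‖ := by
    intro n
    exact (hPA (b (n + 1))).2 (a n) (haA n)
  have hmono : Antitone fun n => ‖e n‖ :=
    antitone_nat_of_succ_le fun n => le_trans (hef n) (hfe n)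
  have hbdd : BddBelow (Set.range fun n => ‖e n‖) :=
    ⟨0, fun r ⟨n, hn⟩ => hn ▸ norm_nonneg _⟩
  have hL : Tendsto (fun n => ‖e n‖) atTop (nhds (⨅ n, ‖e n‖)) :=
    tendsto_atTop_ciInf hmono hbdd
  set L := ⨅ n, ‖e n‖ with hLdef
  have hLe : Tendsto (fun n => ‖e (n + 1)‖) atTop (nhds L) :=
    hL.comp (tendsto_add_atTop_nat 1)
  have hfL : Tendsto (fun n => ‖f n‖) atTop (nhds L) :=
    tendsto_of_tendsto_of_tendsto_of_le_of_le hLe hL hef hfe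
  -- parallelogram estimate
  have hkey : ∀ n, ‖e n - f n‖ ^ 2 ≤ 2 * ‖e n‖ ^ 2 - 2 * ‖f n‖ ^ 2 := by
    intro n
    have hmid : (1 / 2 : ℝ) • b n + (1 / 2 : ℝ) • b (n + 1) ∈ B :=
      hBconv (hbB n) (hbB (n + 1)) (by norm_num) (by norm_num) (by norm_num)
    have h4 : ‖f n‖ ≤ ‖((1 / 2 : ℝ) • b n + (1 / 2 : ℝ) • b (n + 1)) - a n‖ := by
      have h := (hPB (a n)).2 _ hmid
      rw [← hbPB n] at h
      calc ‖f n‖ = ‖a n - b (n + 1)‖ := norm_sub_rev _ _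
        _ ≤ ‖a n - ((1 / 2 : ℝ) • b n + (1 / 2 : ℝ) • b (n + 1))‖ := h
        _ = _ := norm_sub_rev _ _
    have h5 : e n + f n = (2 : ℝ) • (((1 / 2 : ℝ) • b n + (1 / 2 : ℝ) • b (n + 1)) - a n) := by
      rw [hedef, hfdef]
      module
    have h6 : ‖e n + f n‖ = 2 * ‖((1 / 2 : ℝ) • b n + (1 / 2 : ℝ) • b (n + 1)) - a n‖ := by
      rw [h5, norm_smul]
      norm_num
    have hpar := parallelogram_law_with_norm ℝ (e n) (f n)
    have h7 : 2 * ‖f n‖ ≤ ‖e n + f n‖ := by rw [h6]; linarith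
    nlinarith [norm_nonneg (e n + f n), norm_nonneg (f n), norm_nonneg (e n)]
  have hme : Tendsto (fun n => ‖e n - f n‖ ^ 2) atTop (nhds 0) := by
    apply squeeze_zero' (Filter.Eventually.of_forall fun n => by positivity)
      (Filter.Eventually.of_forall hkey)
    have h := ((hL.pow 2).const_mul 2).sub ((hfL.pow 2).const_mul 2)
    simpa using h
  have hEF : Tendsto (fun n => e n - f n) atTop (nhds 0) := by
    rw [tendsto_zero_iff_norm_tendsto_zero]
    have h := (Real.continuous_sqrt.tendsto 0).comp hme
    have heq : (fun n => ‖e n - f n‖) = fun n => Real.sqrt (‖e n - f n‖ ^ 2) := by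
      funext n; rw [Real.sqrt_sq (norm_nonneg _)]
    rw [heq]
    simp only [Function.comp_def] at h
    simpa using h
  have hstep0 : Tendsto (fun n => b (n + 1) - b n) atTop (nhds 0) := by
    have heq : (fun n => b (n + 1) - b n) = fun n => -(e n - f n) := by
      funext n; rw [hedef, hfdef]
      show b (n + 1) - b n = -((b n - a n) - (b (n + 1) - a n)); abel
    rw [heq]
    simpa using hEF.neg
  have hstepnorm : Tendsto (fun n => ‖b (n + 1) - b n‖) atTop (nhds 0) := by
    simpa using hstep0.norm
  -- norms blow up
  have hbinf : Tendsto (fun n => ‖b n‖) atTop atTop := by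
    by_contra hcon
    rw [tendsto_atTop] at hcon
    push_neg at hcon
    obtain ⟨M, hM⟩ := hcon
    have hfreq : ∃ᶠ n in atTop, ‖b n‖ ≤ M := by
      exact hM.mono fun n hn => hn.le
    obtain ⟨φ, hφmono, hφ⟩ := Filter.extraction_of_frequently_atTop hfreq
    have hball : ∀ k, b (φ k) ∈ Metric.closedBall (0 : X) M := by
      intro k; rw [Metric.mem_closedBall, dist_zero_right]; exact hφ k
    obtain ⟨z, _, ψ, hψmono, hψ⟩ := (isCompact_closedBall (0 : X) M).tendsto_subseq hball
    have hcomp : Tendsto (fun k => b (φ (ψ k))) atTop (nhds z) := hψ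
    have h1 : Tendsto (fun k => T (b (φ (ψ k)))) atTop (nhds (T z)) :=
      (hTcont.tendsto z).comp hcomp
    have h2 : Tendsto (fun k => b (φ (ψ k) + 1)) atTop (nhds z) := by
      have hsub : Tendsto (fun k => b (φ (ψ k) + 1) - b (φ (ψ k))) atTop (nhds 0) :=
        hstep0.comp ((hφmono.comp hψmono).tendsto_atTop)
      have h := hcomp.add hsub
      simp only [add_sub_cancel, add_zero] at h
      exact h
    have h3 : (fun k => b (φ (ψ k) + 1)) = fun k => T (b (φ (ψ k))) := by
      funext k; exact hbsucc _
    rw [h3] at h2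
    exact hfix z (tendsto_nhds_unique h1 h2)
  set u : ℕ → X := fun n => ‖b n‖⁻¹ • b n with hudef
  have hular : ∀ n, ‖u n‖ ≤ 1 := by
    intro n
    rw [hudef]
    simp only []
    rcases eq_or_ne (b n) 0 with h | h
    · simp [h]
    · rw [norm_smul, norm_inv, norm_norm, inv_mul_cancel₀ (norm_ne_zero_iff.mpr h)]
  have huev1 : ∀ᶠ n in atTop, ‖u n‖ = 1 := by
    filter_upwards [hbinf.eventually_ge_atTop 1] with n hn
    have h : b n ≠ 0 := by
      intro h0; rw [h0, norm_zero] at hn; linarith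
    rw [hudef]
    simp only []
    rw [norm_smul, norm_inv, norm_norm, inv_mul_cancel₀ (norm_ne_zero_iff.mpr h)]
  have hustep : Tendsto (fun n => ‖u (n + 1) - u n‖) atTop (nhds 0) := by
    apply squeeze_zero' (Filter.Eventually.of_forall fun n => norm_nonneg _)
      (g := fun n => 2 * ‖b n - b (n + 1)‖)
    · filter_upwards [hbinf.eventually_ge_atTop 1,
        (hbinf.comp (tendsto_add_atTop_nat 1)).eventually_ge_atTop 1] with n hn hn1
      have hb0 : b n ≠ 0 := by intro h0; rw [h0, norm_zero] at hn; linarith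
      have hb1 : b (n + 1) ≠ 0 := by
        intro h0
        have : ‖b (n + 1)‖ = 0 := by rw [h0, norm_zero]
        have h2 : (1:ℝ) ≤ ‖b (n+1)‖ := hn1
        rw [this] at h2; linarith
      have h := normalize_sub_le (b n) (b (n + 1)) hb0 hb1
      have h2 : ‖u (n + 1) - u n‖ = ‖u n - u (n + 1)‖ := norm_sub_rev _ _
      rw [h2]
      calc ‖u n - u (n + 1)‖ ≤ 2 * ‖b n - b (n + 1)‖ / ‖b n‖ := h
        _ ≤ 2 * ‖b n - b (n + 1)‖ := by
            apply div_le_self (by positivity) hn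
    · have h := hstepnorm.const_mul 2
      have heq : (fun n => 2 * ‖b n - b (n + 1)‖) = fun n => 2 * ‖b (n + 1) - b n‖ := by
        funext n; rw [norm_sub_rev]
      rw [heq]
      simpa using h
  -- cluster directions are recession directions
  have hGood : ∀ (w : X) (φ : ℕ → ℕ), StrictMono φ →
      Tendsto (fun k => u (φ k)) atTop (nhds w) →
      ‖w‖ = 1 ∧ (∀ c ∈ A, ∀ t : ℝ, 0 ≤ t → c + t • w ∈ A) ∧
        (∀ c ∈ B, ∀ t : ℝ, 0 ≤ t → c + t • w ∈ B) := by
    intro w φ hφ hw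
    have hφtop : Tendsto φ atTop atTop := hφ.tendsto_atTop
    have hbφ : Tendsto (fun k => ‖b (φ k)‖) atTop atTop := hbinf.comp hφtop
    have hnorm1 : ‖w‖ = 1 := by
      have h1 : Tendsto (fun k => ‖u (φ k)‖) atTop (nhds ‖w‖) := hw.norm
      have h2 : ∀ᶠ k in atTop, ‖u (φ k)‖ = 1 := hφtop.eventually huev1
      have h3 : Tendsto (fun k => ‖u (φ k)‖) atTop (nhds 1) :=
        Tendsto.congr' (EventuallyEq.symm h2) tendsto_const_nhds
      exact tendsto_nhds_unique h1 h3
    have hrecB : ∀ c ∈ B, ∀ t : ℝ, 0 ≤ t → c + t • w ∈ B := by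
      intro c hc t ht
      exact recession_dir hBcl hBconv (fun k => hbB (φ k)) hbφ hw hc ht
    have hbnd : ∀ n, ‖b n‖ - ‖e 0‖ ≤ ‖a n‖ := by
      intro n
      have h1 : ‖b n‖ - ‖a n‖ ≤ ‖b n - a n‖ := norm_sub_norm_le _ _
      have h3 : ‖e n‖ ≤ ‖e 0‖ := hmono (Nat.zero_le n)
      have h2 : ‖b n - a n‖ = ‖e n‖ := rfl
      linarith
    have haφ : Tendsto (fun k => ‖a (φ k)‖) atTop atTop := by
      apply tendsto_atTop_mono (fun k => hbnd (φ k))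
      exact tendsto_atTop_add_const_right _ _ hbφ
    have haw : Tendsto (fun k => ‖a (φ k)‖⁻¹ • a (φ k)) atTop (nhds w) := by
      have hdiff : Tendsto (fun k => u (φ k) - ‖a (φ k)‖⁻¹ • a (φ k)) atTop (nhds 0) := by
        rw [tendsto_zero_iff_norm_tendsto_zero]
        apply squeeze_zero' (Filter.Eventually.of_forall fun k => norm_nonneg _)
          (g := fun k => 2 * ‖e 0‖ * ‖b (φ k)‖⁻¹)
        · filter_upwards [hbφ.eventually_ge_atTop (‖e 0‖ + 1)] with k hk
          have hb0 : (0:ℝ) < ‖b (φ k)‖ := lt_of_lt_of_le (by positivity) hk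
          have hbne : b (φ k) ≠ 0 := norm_pos_iff.mp hb0
          have ha0 : (0:ℝ) < ‖a (φ k)‖ := by
            have := hbnd (φ k); linarith
          have hane : a (φ k) ≠ 0 := norm_pos_iff.mp ha0
          have h := normalize_sub_le (b (φ k)) (a (φ k)) hbne hane
          have hba : ‖b (φ k) - a (φ k)‖ ≤ ‖e 0‖ := by
            have : ‖b (φ k) - a (φ k)‖ = ‖e (φ k)‖ := rfl
            rw [this]; exact hmono (Nat.zero_le _)
          calc ‖u (φ k) - ‖a (φ k)‖⁻¹ • a (φ k)‖
              ≤ 2 * ‖b (φ k) - a (φ k)‖ / ‖b (φ k)‖ := h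
            _ ≤ 2 * ‖e 0‖ / ‖b (φ k)‖ := by gcongr
            _ = 2 * ‖e 0‖ * ‖b (φ k)‖⁻¹ := by rw [div_eq_mul_inv]
        · have h := (tendsto_inv_atTop_zero.comp hbφ).const_mul (2 * ‖e 0‖)
          simpa using h
      have h := hw.sub hdiff
      simp only [sub_sub_cancel] at h
      simpa using h
    have hrecA : ∀ c ∈ A, ∀ t : ℝ, 0 ≤ t → c + t • w ∈ A := by
      intro c hc t ht
      exact recession_dir hAcl hAconv (fun k => haA (φ k)) haφ haw hc ht
    exact ⟨hnorm1, hrecA, hrecB⟩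
  -- get a cluster point
  have hball : ∀ n, u n ∈ Metric.closedBall (0 : X) 1 := by
    intro n; rw [Metric.mem_closedBall, dist_zero_right]; exact hular n
  obtain ⟨q, _, φ, hφ, hq⟩ := (isCompact_closedBall (0 : X) 1).tendsto_subseq hball
  have hGq := hGood q φ hφ hq
  have htendu : Tendsto u atTop (nhds q) := by
    by_contra hcon
    rw [Metric.tendsto_atTop] at hcon
    push_neg at hcon
    obtain ⟨ε, hε, hfreq⟩ := hcon
    have hfreq' : ∃ᶠ n in atTop, ε ≤ dist (u n) q := by
      rw [Filter.frequently_atTop]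
      intro N; obtain ⟨n, hn1, hn2⟩ := hfreq N; exact ⟨n, hn1, hn2⟩
    obtain ⟨φ₂, hφ₂, hP₂⟩ := Filter.extraction_of_frequently_atTop hfreq'
    obtain ⟨q', _, ψ₂, hψ₂, hq'⟩ :=
      (isCompact_closedBall (0 : X) 1).tendsto_subseq (fun k => hball (φ₂ k))
    have hq'c : Tendsto (fun k => u (φ₂ (ψ₂ k))) atTop (nhds q') := hq'
    have hGq' := hGood q' (φ₂ ∘ ψ₂) (hφ₂.comp hψ₂) hq'c
    have hq'ne : q' ≠ q := by
      have hh : Tendsto (fun k => dist (u (φ₂ (ψ₂ k))) q) atTop (nhds (dist q' q)) :=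
        hq'c.dist tendsto_const_nhds
      have hge : ε ≤ dist q' q :=
        ge_of_tendsto hh (Filter.Eventually.of_forall fun k => hP₂ (ψ₂ k))
      intro h; rw [h, dist_self] at hge; linarith
    have hq'neg : q' = -q := by
      by_contra hn
      exact hABempty q' q hGq'.1 hGq.1 hq'ne hn hGq'.2.1 hGq.2.1 hGq'.2.2 hGq.2.2
    have hfreqann : ∃ᶠ n in atTop, 1/2 ≤ ‖u n - q‖ ∧ ‖u n - q‖ ≤ 1 := by
      rw [Filter.frequently_atTop]
      intro N
      obtain ⟨N₁, hN₁⟩ := Filter.eventually_atTop.mp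
        (hustep.eventually (gt_mem_nhds (by norm_num : (0:ℝ) < 1/4)))
      obtain ⟨K₀, hK₀⟩ := Metric.tendsto_atTop.mp hq (1/4) (by norm_num)
      set k₀ := max K₀ (max N N₁) with hk₀def
      set n₀ := φ k₀ with hn₀def
      have hk₀a : K₀ ≤ k₀ := le_max_left _ _
      have hk₀b : N ≤ k₀ := le_trans (le_max_left _ _) (le_max_right _ _)
      have hk₀c : N₁ ≤ k₀ := le_trans (le_max_right _ _) (le_max_right _ _)
      have hφk₀ : k₀ ≤ n₀ := hφ.le_apply
      have hn₀N : N ≤ n₀ := by omega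
      have hn₀N₁ : N₁ ≤ n₀ := by omega
      have hn₀near : ‖u n₀ - q‖ < 1/4 := by
        have h := hK₀ k₀ hk₀a
        rwa [Function.comp_apply, dist_eq_norm] at h
      obtain ⟨K₁, hK₁⟩ := Metric.tendsto_atTop.mp hq'c (1/4) (by norm_num)
      set k₁ := max K₁ (n₀ + 1) with hk₁def
      set m := φ₂ (ψ₂ k₁) with hmdef
      have hk₁a : K₁ ≤ k₁ := le_max_left _ _
      have hk₁b : n₀ + 1 ≤ k₁ := le_max_right _ _
      have hch1 : k₁ ≤ ψ₂ k₁ := hψ₂.le_apply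
      have hch2 : ψ₂ k₁ ≤ φ₂ (ψ₂ k₁) := hφ₂.le_apply
      have hmgt : n₀ < m := by omega
      have hmfar : 1 < ‖u m - q‖ := by
        have h1 : ‖u m - q'‖ < 1/4 := by
          have h := hK₁ k₁ hk₁a
          rwa [dist_eq_norm] at h
        have h2 : ‖u m + q‖ < 1/4 := by rwa [hq'neg, sub_neg_eq_add] at h1
        have h3 : (2:ℝ) = ‖(u m + q) - (u m - q)‖ := by
          have he : (u m + q) - (u m - q) = (2:ℝ) • q := by module
          rw [he, norm_smul, hGq.1]
          norm_num
        have h4 := norm_sub_le (u m + q) (u m - q)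
        linarith
      have hex : ∃ j, n₀ < j ∧ j ≤ m ∧ 1/2 ≤ ‖u j - q‖ :=
        ⟨m, hmgt, le_refl m, by linarith⟩
      obtain ⟨hk1, hk2, hk3⟩ := Nat.find_spec hex
      refine ⟨Nat.find hex, by omega, hk3, ?_⟩
      obtain ⟨j, hj⟩ : ∃ j, Nat.find hex = j + 1 := ⟨Nat.find hex - 1, by omega⟩
      rw [hj] at hk1 hk2 hk3 ⊢
      have hjlt : ‖u j - q‖ < 1/2 := by
        rcases eq_or_lt_of_le (show n₀ ≤ j by omega) with heq | hlt
        · rw [← heq]; linarith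
        · have hmin := Nat.find_min hex (show j < Nat.find hex by omega)
          push_neg at hmin
          exact hmin hlt (by omega)
      have hst : ‖u (j + 1) - u j‖ < 1/4 := hN₁ j (by omega)
      have htri : ‖u (j + 1) - q‖ ≤ ‖u j - q‖ + ‖u (j + 1) - u j‖ := by
        have he : u (j + 1) - q = (u j - q) + (u (j + 1) - u j) := by abel
        rw [he]; exact norm_add_le _ _
      linarith
    obtain ⟨φ₃, hφ₃, hP₃⟩ := Filter.extraction_of_frequently_atTop hfreqann
    obtain ⟨q'', _, ψ₃, hψ₃, hq''⟩ :=
      (isCompact_closedBall (0 : X) 1).tendsto_subseq (fun k => hball (φ₃ k))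
    have hq''c : Tendsto (fun k => u (φ₃ (ψ₃ k))) atTop (nhds q'') := hq''
    have hGq'' := hGood q'' (φ₃ ∘ ψ₃) (hφ₃.comp hψ₃) hq''c
    have hnq : Tendsto (fun k => ‖u (φ₃ (ψ₃ k)) - q‖) atTop (nhds ‖q'' - q‖) :=
      (hq''c.sub_const q).norm
    have hd1 : 1/2 ≤ ‖q'' - q‖ :=
      ge_of_tendsto hnq (Filter.Eventually.of_forall fun k => (hP₃ (ψ₃ k)).1)
    have hd2 : ‖q'' - q‖ ≤ 1 :=
      le_of_tendsto hnq (Filter.Eventually.of_forall fun k => (hP₃ (ψ₃ k)).2)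
    have hne1 : q'' ≠ q := by
      intro h; rw [h, sub_self, norm_zero] at hd1; linarith
    have hne2 : q'' ≠ -q := by
      intro h
      rw [h] at hd2
      have he : (-q) - q = (-2 : ℝ) • q := by module
      rw [he, norm_smul, hGq.1] at hd2
      norm_num at hd2
    exact hABempty q'' q hGq''.1 hGq.1 hne1 hne2 hGq''.2.1 hGq.2.1 hGq''.2.2 hGq.2.2
  refine ⟨q, ?_⟩
  rw [← tendsto_add_atTop_iff_nat 1]
  have heq : (fun n : ℕ => ‖T^[n + 1] x‖⁻¹ • T^[n + 1] x) = u := by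
    funext n
    rw [hudef]
    simp only []
    rw [hbdef]
    simp only []
    rw [Function.iterate_succ_apply]
  rw [heq]
  exact htendu
end

section
/- Let f : ℝ → ℝ ∪ {+∞} be proper, convex and lower semicontinuous; suppose f is bounded below but has no minimizer. Let a ∈ X with ‖a‖ = 1, define F : X → ℝ ∪ {+∞} by F(x) := f(⟪a, x⟫), and let T := prox_F. Then for every x ∈ X the sequence (Tⁿx/‖Tⁿx‖) is eventually well defined and converges, with limit equal to a or to −a. -/
open Filter Topology

variable {X : Type*} [NormedAddCommGroup X] [InnerProductSpace ℝ X] [FiniteDimensional ℝ X]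

/-- `p` is the proximity operator of `g`: `p x` minimizes `y ↦ g y + ‖x − y‖²/2`. -/
def IsProxOp {Y : Type*} [NormedAddCommGroup Y] (g : Y → EReal) (p : Y → Y) : Prop :=
  ∀ x y : Y, g (p x) + ((‖x - p x‖ ^ 2 / 2 : ℝ) : EReal) ≤ g y + ((‖x - y‖ ^ 2 / 2 : ℝ) : EReal)


section ScalarAux
variable (f : ℝ → EReal) (p : ℝ → ℝ)

/-- If `s` satisfies the prox inequality with itself as prox point, it's a minimizer. -/
lemma aux_min (hbot : ∀ z : ℝ, f z ≠ ⊥)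
    (hconv : ∀ z w t : ℝ, 0 ≤ t → t ≤ 1 →
      f (t * z + (1 - t) * w) ≤ (t : EReal) * f z + ((1 - t : ℝ) : EReal) * f w)
    (s : ℝ) (hfin : f s ≠ ⊤)
    (h : ∀ w : ℝ, f s ≤ f w + (((s - w) ^ 2 / 2 : ℝ) : EReal)) :
    ∀ w : ℝ, f s ≤ f w := by
  intro w
  by_cases hw : f w = ⊤
  · simp [hw]
  set r := (f s).toReal with hrdef
  have hr : f s = (r : EReal) := (EReal.coe_toReal hfin (hbot s)).symm
  set c := (f w).toReal with hcdef
  have hc : f w = (c : EReal) := (EReal.coe_toReal hw (hbot w)).symm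
  rw [hr, hc, EReal.coe_le_coe_iff]
  by_contra hlt
  push_neg at hlt
  rcases eq_or_ne w s with rfl | hws
  · rw [hr] at hc
    exact absurd (by exact_mod_cast hc : r = c) (by linarith)
  have hws' : w - s ≠ 0 := sub_ne_zero.mpr hws
  have hd : (0:ℝ) < (w - s) ^ 2 := by positivity
  set t : ℝ := min 1 ((r - c) / (w - s) ^ 2) with htdef
  have ht0 : 0 < t := lt_min one_pos (div_pos (by linarith) hd)
  have ht1 : t ≤ 1 := min_le_left _ _
  have htd : t * (w - s) ^ 2 ≤ r - c := by
    have := min_le_right 1 ((r - c) / (w - s) ^ 2)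
    calc t * (w-s)^2 ≤ ((r - c) / (w - s) ^ 2) * (w-s)^2 := by nlinarith
    _ = r - c := by field_simp
  have hcv := hconv w s t ht0.le ht1
  rw [hr, hc] at hcv
  have hcv' : f (t * w + (1 - t) * s) ≤ (((t * c + (1 - t) * r : ℝ)) : EReal) := by
    calc f (t * w + (1 - t) * s) ≤ (t : EReal) * (c:EReal) + ((1 - t : ℝ) : EReal) * (r:EReal) := hcv
    _ = _ := by rw [← EReal.coe_mul, ← EReal.coe_mul, ← EReal.coe_add]
  have hP := h (t * w + (1 - t) * s)
  have key : f s ≤ (((t * c + (1 - t) * r) + (s - (t * w + (1 - t) * s)) ^ 2 / 2 : ℝ) : EReal) := by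
    calc f s ≤ f (t * w + (1 - t) * s) + (((s - (t * w + (1 - t) * s)) ^ 2 / 2 : ℝ) : EReal) := hP
    _ ≤ (((t * c + (1 - t) * r : ℝ)) : EReal) + (((s - (t * w + (1 - t) * s)) ^ 2 / 2 : ℝ) : EReal) :=
        add_le_add hcv' le_rfl
    _ = _ := by rw [← EReal.coe_add]
  rw [hr, EReal.coe_le_coe_iff] at key
  have hsq : (s - (t * w + (1 - t) * s)) ^ 2 = t^2 * (w - s)^2 := by ring
  nlinarith [sq_nonneg t, mul_pos ht0 hd]

end ScalarAux

section ScalarAux2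
variable (f : ℝ → EReal) (p : ℝ → ℝ)
variable (hproper : ∃ z : ℝ, f z ≠ ⊤) (hbot : ∀ z : ℝ, f z ≠ ⊥)
variable (hconv : ∀ z w t : ℝ, 0 ≤ t → t ≤ 1 →
      f (t * z + (1 - t) * w) ≤ (t : EReal) * f z + ((1 - t : ℝ) : EReal) * f w)
variable (hnomin : ¬∃ z : ℝ, ∀ w : ℝ, f z ≤ f w)
variable (hlsc : LowerSemicontinuous f)
variable (hP : ∀ s w : ℝ, f (p s) + (((s - p s) ^ 2 / 2 : ℝ) : EReal)
    ≤ f w + (((s - w) ^ 2 / 2 : ℝ) : EReal))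

lemma ereal_nonneg_coe (c : ℝ) (hc : 0 ≤ c) (x : EReal) : x ≤ x + (c : EReal) :=
  le_add_of_nonneg_right (by exact_mod_cast hc)

include hproper hbot hP in
lemma aux_fin : ∀ s : ℝ, f (p s) ≠ ⊤ := by
  intro s
  obtain ⟨z, hz⟩ := hproper
  have h1 : f (p s) ≤ f z + (((s - z) ^ 2 / 2 : ℝ) : EReal) :=
    (ereal_nonneg_coe _ (by positivity) _).trans (hP s z)
  intro htop
  rw [htop, top_le_iff] at h1
  have hz' : f z = ((f z).toReal : EReal) := (EReal.coe_toReal hz (hbot z)).symm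
  rw [hz', ← EReal.coe_add] at h1
  exact (EReal.coe_ne_top _) h1

include hproper hbot hconv hnomin hP in
lemma aux_ne : ∀ s : ℝ, p s ≠ s := by
  intro s hfix
  apply hnomin
  refine ⟨s, aux_min f hbot hconv s ?_ ?_⟩
  · have := aux_fin f p hproper hbot hP s
    rwa [hfix] at this
  · intro w
    have := hP s w
    rw [hfix] at this
    simpa using this
-- note: `(s-s)^2/2 = 0` and `f s + (0:EReal) = f s`; check simpa handles coercion of 0

include hproper hbot hP in
lemma aux_mono : ∀ s s' : ℝ, s ≤ s' → p s ≤ p s' := by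
  intro s s' hss
  rcases eq_or_lt_of_le hss with rfl | hlt
  · exact le_refl _
  have h1 := hP s (p s')
  have h2 := hP s' (p s)
  set A := (f (p s)).toReal with hA
  set B := (f (p s')).toReal with hB
  have hAe : f (p s) = (A : EReal) := (EReal.coe_toReal (aux_fin f p hproper hbot hP s) (hbot _)).symm
  have hBe : f (p s') = (B : EReal) := (EReal.coe_toReal (aux_fin f p hproper hbot hP s') (hbot _)).symm
  rw [hAe, hBe, ← EReal.coe_add, ← EReal.coe_add, EReal.coe_le_coe_iff] at h1 h2
  nlinarith [h1, h2, hlt]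

include hbot hP in
lemma aux_desc : ∀ s : ℝ, f (p s) ≤ f s := by
  intro s
  have := hP s s
  simp only [sub_self] at this
  calc f (p s) ≤ f (p s) + (((s - p s) ^ 2 / 2 : ℝ) : EReal) :=
        ereal_nonneg_coe _ (by positivity) _
  _ ≤ f s + (((0:ℝ) ^ 2 / 2 : ℝ) : EReal) := this
  _ = f s := by norm_num

include hproper hbot hconv hnomin hlsc hP in
lemma aux_up (s : ℝ) (hs : s < p s) :
    Tendsto (fun n : ℕ => p^[n] s) atTop atTop := by
  set u : ℕ → ℝ := fun n => p^[n] s with hu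
  have hstep : ∀ n : ℕ, u n < u (n + 1) := by
    intro n
    induction n with
    | zero => simpa [hu] using hs
    | succ n ih =>
      have h1 : u (n+1) ≤ u (n+2) := by
        have := aux_mono f p hproper hbot hP (u n) (u (n+1)) ih.le
        simpa [hu, Function.iterate_succ_apply'] using this
      have h2 : u (n+2) ≠ u (n+1) := by
        have := aux_ne f p hproper hbot hconv hnomin hP (u (n+1))
        simpa [hu, Function.iterate_succ_apply'] using this
      exact lt_of_le_of_ne h1 (Ne.symm h2)
  have hmono : Monotone u := monotone_nat_of_le_succ (fun n => (hstep n).le)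
  rcases tendsto_of_monotone hmono with h | ⟨L, hL⟩
  · exact h
  exfalso
  -- show L is a minimizer
  have hPL : ∀ w : ℝ, f L ≤ f w + (((L - w) ^ 2 / 2 : ℝ) : EReal) := by
    intro w
    by_cases hw : f w = ⊤
    · simp [hw]
    set c := (f w).toReal with hc
    have hce : f w = (c : EReal) := (EReal.coe_toReal hw (hbot w)).symm
    rw [hce, ← EReal.coe_add]
    by_contra hlt
    push_neg at hlt
    obtain ⟨M, hM1, hM2⟩ := exists_between hlt
    have hMreal : M ≠ ⊤ := hM2.ne_top
    have hMbot : M ≠ ⊥ := ne_bot_of_gt hM1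
    set M' := M.toReal with hM'
    have hMe : M = (M' : EReal) := (EReal.coe_toReal hMreal hMbot).symm
    -- lsc: eventually M < f (u (n+1))
    have hev1 : ∀ᶠ n : ℕ in atTop, M < f (u (n + 1)) := by
      have := hlsc L M hM2
      have hL' : Tendsto (fun n : ℕ => u (n + 1)) atTop (nhds L) :=
        hL.comp (tendsto_add_atTop_nat 1)
      exact hL'.eventually this
    -- prox: f (u (n+1)) ≤ c + (u n − w)²/2
    have hub : ∀ n : ℕ, f (u (n + 1)) ≤ ((c + (u n - w) ^ 2 / 2 : ℝ) : EReal) := by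
      intro n
      have h0 := hP (u n) w
      rw [hce, ← EReal.coe_add] at h0
      calc f (u (n+1)) = f (p (u n)) := by rw [hu]; simp [Function.iterate_succ_apply']
      _ ≤ f (p (u n)) + (((u n - p (u n)) ^ 2 / 2 : ℝ) : EReal) :=
          ereal_nonneg_coe _ (by positivity) _
      _ ≤ _ := h0
    -- convergence: (u n − w)²/2 → (L−w)²/2 < M' − c eventually
    have hlim : Tendsto (fun n : ℕ => c + (u n - w) ^ 2 / 2) atTop (nhds (c + (L - w) ^ 2 / 2)) := by
      have : Continuous (fun x : ℝ => c + (x - w) ^ 2 / 2) :=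
        continuous_const.add (((continuous_id.sub continuous_const).pow 2).div_const 2)
      exact (this.tendsto L).comp hL
    have hlt' : c + (L - w) ^ 2 / 2 < M' := by
      rw [hMe, EReal.coe_lt_coe_iff] at hM1
      exact hM1
    have hev2 : ∀ᶠ n : ℕ in atTop, c + (u n - w) ^ 2 / 2 < M' :=
      Tendsto.eventually_lt_const hlt' hlim
    obtain ⟨n, h1, h2⟩ := (hev1.and hev2).exists
    have := (h1.trans_le (hub n))
    rw [hMe, EReal.coe_lt_coe_iff] at this
    linarith
  have hfinL : f L ≠ ⊤ := by
    obtain ⟨z, hz⟩ := hproper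
    have h1 := hPL z
    have hz' : f z = ((f z).toReal : EReal) := (EReal.coe_toReal hz (hbot z)).symm
    rw [hz', ← EReal.coe_add] at h1
    exact ne_top_of_le_ne_top (EReal.coe_ne_top _) h1
  exact hnomin ⟨L, aux_min f hbot hconv L hfinL hPL⟩

end ScalarAux2

section ScalarMain
variable (f : ℝ → EReal) (p : ℝ → ℝ)
variable (hproper : ∃ z : ℝ, f z ≠ ⊤) (hbot : ∀ z : ℝ, f z ≠ ⊥)
variable (hconv : ∀ z w t : ℝ, 0 ≤ t → t ≤ 1 →
      f (t * z + (1 - t) * w) ≤ (t : EReal) * f z + ((1 - t : ℝ) : EReal) * f w)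
variable (hnomin : ¬∃ z : ℝ, ∀ w : ℝ, f z ≤ f w)
variable (hlsc : LowerSemicontinuous f)
variable (hP : ∀ s w : ℝ, f (p s) + (((s - p s) ^ 2 / 2 : ℝ) : EReal)
    ≤ f w + (((s - w) ^ 2 / 2 : ℝ) : EReal))

include hproper hbot hconv hnomin hlsc hP in
lemma aux_main (s : ℝ) :
    Tendsto (fun n : ℕ => p^[n] s) atTop atTop ∨
      Tendsto (fun n : ℕ => p^[n] s) atTop atBot := by
  rcases lt_trichotomy (p s) s with hlt | heq | hgt
  · right
    set f' : ℝ → EReal := fun z => f (-z) with hf'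
    set p' : ℝ → ℝ := fun z => -p (-z) with hp'
    have hproper' : ∃ z : ℝ, f' z ≠ ⊤ := by
      obtain ⟨z, hz⟩ := hproper
      exact ⟨-z, by simpa [hf'] using hz⟩
    have hbot' : ∀ z : ℝ, f' z ≠ ⊥ := fun z => hbot (-z)
    have hconv' : ∀ z w t : ℝ, 0 ≤ t → t ≤ 1 →
        f' (t * z + (1 - t) * w) ≤ (t : EReal) * f' z + ((1 - t : ℝ) : EReal) * f' w := by
      intro z w t ht0 ht1
      have h0 := hconv (-z) (-w) t ht0 ht1
      have e : t * -z + (1 - t) * -w = -(t * z + (1 - t) * w) := by ring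
      rw [e] at h0
      exact h0
    have hnomin' : ¬∃ z : ℝ, ∀ w : ℝ, f' z ≤ f' w := by
      rintro ⟨z, hz⟩
      exact hnomin ⟨-z, fun w => by simpa [hf'] using hz (-w)⟩
    have hlsc' : LowerSemicontinuous f' := LowerSemicontinuous.comp hlsc continuous_neg
    have hP' : ∀ s w : ℝ, f' (p' s) + (((s - p' s) ^ 2 / 2 : ℝ) : EReal)
        ≤ f' w + (((s - w) ^ 2 / 2 : ℝ) : EReal) := by
      intro s w
      have h0 := hP (-s) (-w)
      have e1 : (-s - p (-s)) ^ 2 / 2 = (s - -p (-s)) ^ 2 / 2 := by ring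
      have e2 : (-s - -w) ^ 2 / 2 = (s - w) ^ 2 / 2 := by ring
      rw [e1, e2] at h0
      simpa [hf', hp'] using h0
    have hup := aux_up f' p' hproper' hbot' hconv' hnomin' hlsc' hP' (-s)
      (by simp only [hp', neg_neg, neg_lt_neg_iff]; exact hlt)
    have hiter : ∀ n : ℕ, p'^[n] (-s) = -(p^[n] s) := by
      intro n
      induction n with
      | zero => simp
      | succ n ih => rw [Function.iterate_succ_apply', Function.iterate_succ_apply', ih, hp']; simp
    have hup' : Tendsto (fun n : ℕ => -(p^[n] s)) atTop atTop := by
      refine hup.congr (fun n => ?_)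
      exact hiter n
    have h2 := tendsto_neg_atTop_atBot.comp hup'
    refine h2.congr (fun n => ?_)
    simp
  · exact absurd heq (aux_ne f p hproper hbot hconv hnomin hP s)
  · exact Or.inl (aux_up f p hproper hbot hconv hnomin hlsc hP s hgt)

end ScalarMain

lemma geomlim {X : Type*} [NormedAddCommGroup X] [InnerProductSpace ℝ X]
    (a v : X) (ha : ‖a‖ = 1) (u : ℕ → ℝ) (hu : Tendsto u atTop atTop) :
    (∀ᶠ n : ℕ in atTop, v + u n • a ≠ 0) ∧
      Tendsto (fun n : ℕ => ‖v + u n • a‖⁻¹ • (v + u n • a)) atTop (nhds a) := by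
  have hev : ∀ᶠ n : ℕ in atTop, ‖v‖ < u n := hu.eventually_gt_atTop ‖v‖
  have hpos : ∀ᶠ n : ℕ in atTop, 0 < u n := hu.eventually_gt_atTop 0
  have hne : ∀ᶠ n : ℕ in atTop, v + u n • a ≠ 0 := by
    filter_upwards [hev, hpos] with n h1 h2
    intro h0
    have : ‖u n • a‖ ≤ ‖v + u n • a‖ + ‖v‖ := by
      calc ‖u n • a‖ = ‖(v + u n • a) - v‖ := by rw [add_sub_cancel_left]
      _ ≤ ‖v + u n • a‖ + ‖v‖ := norm_sub_le _ _
    rw [h0, norm_zero, norm_smul, ha, mul_one, Real.norm_eq_abs, abs_of_pos h2] at this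
    linarith
  refine ⟨hne, ?_⟩
  have ha0 : a ≠ 0 := by intro h; rw [h, norm_zero] at ha; norm_num at ha
  set w : ℕ → X := fun n => (u n)⁻¹ • v + a with hw
  have hwlim : Tendsto w atTop (nhds a) := by
    have h1 : Tendsto (fun n : ℕ => (u n)⁻¹) atTop (nhds 0) :=
      tendsto_inv_atTop_zero.comp hu
    have h2 : Tendsto (fun n : ℕ => (u n)⁻¹ • v) atTop (nhds ((0:ℝ) • v)) :=
      h1.smul_const v
    rw [zero_smul] at h2
    simpa using h2.add_const a
  have hcont : ContinuousAt (fun y : X => ‖y‖⁻¹ • y) a := by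
    have hn : ContinuousAt (fun y : X => ‖y‖⁻¹) a :=
      (continuous_norm.continuousAt).inv₀ (by rw [ha]; norm_num)
    exact hn.smul continuousAt_id
  have hglim : Tendsto (fun n : ℕ => ‖w n‖⁻¹ • w n) atTop (nhds a) := by
    have := hcont.tendsto.comp hwlim
    simpa [ha, Function.comp_def] using this
  refine Tendsto.congr' ?_ hglim
  filter_upwards [hpos] with n h2
  have hvw : v + u n • a = u n • w n := by
    rw [hw]; simp [smul_add, smul_smul, mul_inv_cancel₀ h2.ne']
  rw [hvw, norm_smul, Real.norm_eq_abs, abs_of_pos h2, mul_inv, smul_smul]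
  congr 1
  field_simp

/-- Let `f : ℝ → ℝ ∪ {+∞}` be proper, convex, lower semicontinuous,
bounded below and without minimizer, `‖a‖ = 1`, `F x = f ⟪a, x⟫`, and `T = prox_F`.
Then for every `x` the normalized iterates `Tⁿx/‖Tⁿx‖` are eventually well defined
and converge to `a` or to `−a`. -/
theorem stmt19 (f : ℝ → EReal)
    (hproper : ∃ z : ℝ, f z ≠ ⊤) (hbot : ∀ z : ℝ, f z ≠ ⊥)
    (hconv : ∀ z w t : ℝ, 0 ≤ t → t ≤ 1 →
      f (t * z + (1 - t) * w) ≤ (t : EReal) * f z + ((1 - t : ℝ) : EReal) * f w)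
    (hlsc : LowerSemicontinuous f)
    (hbdd : ∃ m : ℝ, ∀ z : ℝ, (m : EReal) ≤ f z)
    (hnomin : ¬∃ z : ℝ, ∀ w : ℝ, f z ≤ f w)
    (a : X) (ha : ‖a‖ = 1)
    (F : X → EReal) (hF : ∀ x : X, F x = f (inner ℝ a x))
    (T : X → X) (hT : IsProxOp F T) :
    ∀ x : X, (∀ᶠ n : ℕ in atTop, T^[n] x ≠ 0) ∧
      ∃ q : X, (q = a ∨ q = -a) ∧
        Tendsto (fun n : ℕ => ‖T^[n] x‖⁻¹ • T^[n] x) atTop (nhds q) := by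
  obtain ⟨z₀, hz₀⟩ := id hproper
  have haa : (inner ℝ a a : ℝ) = 1 := by
    rw [real_inner_self_eq_norm_sq, ha]; norm_num
  have hsa : ∀ s : ℝ, (inner ℝ a (s • a) : ℝ) = s := by
    intro s; rw [real_inner_smul_right, haa, mul_one]
  have hnsq : ∀ r : ℝ, ‖r • a‖ ^ 2 = r ^ 2 := by
    intro r; rw [norm_smul, Real.norm_eq_abs, ha, mul_one, sq_abs]
  have hFT_fin : ∀ y : X, f (inner ℝ a (T y) : ℝ) ≠ ⊤ := by
    intro y
    have h1 := hT y (z₀ • a)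
    rw [hF (T y), hF (z₀ • a), hsa z₀] at h1
    have hz' : f z₀ = ((f z₀).toReal : EReal) := (EReal.coe_toReal hz₀ (hbot z₀)).symm
    rw [hz', ← EReal.coe_add] at h1
    intro htop
    rw [htop, EReal.top_add_coe] at h1
    exact (EReal.coe_ne_top _) (top_le_iff.mp h1)
  have hK1 : ∀ y : X, T y = y + ((inner ℝ a (T y) : ℝ) - (inner ℝ a y : ℝ)) • a := by
    intro y
    set c : ℝ := (inner ℝ a (T y) : ℝ) - (inner ℝ a y : ℝ) with hc
    set vv : X := T y - y - c • a with hvv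
    have hav : (inner ℝ a vv : ℝ) = 0 := by
      rw [hvv, inner_sub_right, inner_sub_right, real_inner_smul_right, haa, hc]; ring
    have hTy : T y - y = c • a + vv := by rw [hvv]; abel
    have hnorm1 : ‖T y - y‖ ^ 2 = c ^ 2 + ‖vv‖ ^ 2 := by
      rw [hTy, norm_add_sq_real, real_inner_smul_left, hav, hnsq]; ring
    have hy' : (inner ℝ a (y + c • a) : ℝ) = (inner ℝ a (T y) : ℝ) := by
      rw [inner_add_right, real_inner_smul_right, haa, hc]; ring
    have h1 := hT y (y + c • a)
    rw [hF (T y), hF (y + c • a), hy'] at h1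
    set r : ℝ := (f (inner ℝ a (T y) : ℝ)).toReal with hr
    have hre : f (inner ℝ a (T y) : ℝ) = (r : EReal) :=
      (EReal.coe_toReal (hFT_fin y) (hbot _)).symm
    rw [hre, ← EReal.coe_add, ← EReal.coe_add, EReal.coe_le_coe_iff] at h1
    have hyy : ‖y - (y + c • a)‖ ^ 2 = c ^ 2 := by
      have e : y - (y + c • a) = (-c) • a := by rw [neg_smul]; abel
      rw [e, hnsq]; ring
    have hyT : ‖y - T y‖ ^ 2 = ‖T y - y‖ ^ 2 := by rw [norm_sub_rev]
    rw [hyy, hyT, hnorm1] at h1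
    have hv0 : vv = 0 := by
      have h2 : ‖vv‖ = 0 := by nlinarith [norm_nonneg vv]
      exact norm_eq_zero.mp h2
    rw [hvv, sub_sub, sub_eq_zero] at hv0
    exact hv0
  have hK2 : ∀ (y : X) (w : ℝ),
      f (inner ℝ a (T y) : ℝ) + ((((inner ℝ a y : ℝ) - (inner ℝ a (T y) : ℝ)) ^ 2 / 2 : ℝ) : EReal)
        ≤ f w + ((((inner ℝ a y : ℝ) - w) ^ 2 / 2 : ℝ) : EReal) := by
    intro y w
    have h1 := hT y (y + (w - (inner ℝ a y : ℝ)) • a)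
    rw [hF (T y), hF (y + (w - (inner ℝ a y : ℝ)) • a)] at h1
    have e1 : (inner ℝ a (y + (w - (inner ℝ a y : ℝ)) • a) : ℝ) = w := by
      rw [inner_add_right, real_inner_smul_right, haa]; ring
    rw [e1] at h1
    have e2 : ‖y - (y + (w - (inner ℝ a y : ℝ)) • a)‖ ^ 2 = ((inner ℝ a y : ℝ) - w) ^ 2 := by
      have e : y - (y + (w - (inner ℝ a y : ℝ)) • a) = (-(w - (inner ℝ a y : ℝ))) • a := by
        rw [neg_smul]; abel
      rw [e, hnsq]; ring
    have e3 : ‖y - T y‖ ^ 2 = ((inner ℝ a y : ℝ) - (inner ℝ a (T y) : ℝ)) ^ 2 := by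
      have e : y - T y = (-((inner ℝ a (T y) : ℝ) - (inner ℝ a y : ℝ))) • a := by
        conv_lhs => rw [hK1 y]
        rw [neg_smul]; abel
      rw [e, hnsq]; ring
    rw [e2, e3] at h1
    exact h1
  set p : ℝ → ℝ := fun s => (inner ℝ a (T (s • a)) : ℝ) with hp
  have hPp : ∀ s w : ℝ, f (p s) + (((s - p s) ^ 2 / 2 : ℝ) : EReal)
      ≤ f w + (((s - w) ^ 2 / 2 : ℝ) : EReal) := by
    intro s w
    have h1 := hK2 (s • a) w
    rw [hsa s] at h1
    exact h1
  have hpx : ∀ y : X, (inner ℝ a (T y) : ℝ) = p (inner ℝ a y : ℝ) := by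
    intro y
    set s : ℝ := (inner ℝ a y : ℝ) with hs
    set t₁ : ℝ := (inner ℝ a (T y) : ℝ) with ht1
    set t₂ : ℝ := p s with ht2
    by_contra hne
    have H1 := hK2 y
    have H2 := hPp s
    have hfin1 : f t₁ ≠ ⊤ := hFT_fin y
    have hfin2 : f t₂ ≠ ⊤ := hFT_fin (s • a)
    set r₁ : ℝ := (f t₁).toReal with hr1
    set r₂ : ℝ := (f t₂).toReal with hr2
    have he1 : f t₁ = (r₁ : EReal) := (EReal.coe_toReal hfin1 (hbot _)).symm
    have he2 : f t₂ = (r₂ : EReal) := (EReal.coe_toReal hfin2 (hbot _)).symm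
    have e1 : r₁ + (s - t₁) ^ 2 / 2 ≤ r₂ + (s - t₂) ^ 2 / 2 := by
      have h0 := H1 t₂
      rw [he1, he2, ← EReal.coe_add, ← EReal.coe_add, EReal.coe_le_coe_iff] at h0
      exact h0
    have e2 : r₂ + (s - t₂) ^ 2 / 2 ≤ r₁ + (s - t₁) ^ 2 / 2 := by
      have h0 := H2 t₁
      rw [he1, he2, ← EReal.coe_add, ← EReal.coe_add, EReal.coe_le_coe_iff] at h0
      exact h0
    have hcv := hconv t₁ t₂ (1/2) (by norm_num) (by norm_num)
    rw [he1, he2] at hcv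
    have hcv' : f ((1/2 : ℝ) * t₁ + (1 - 1/2 : ℝ) * t₂) ≤ (((1/2) * r₁ + (1/2) * r₂ : ℝ) : EReal) := by
      refine hcv.trans_eq ?_
      rw [← EReal.coe_mul, ← EReal.coe_mul, ← EReal.coe_add]
      norm_num
    set m : ℝ := (1/2 : ℝ) * t₁ + (1 - 1/2 : ℝ) * t₂ with hm
    have hfm_fin : f m ≠ ⊤ := ne_top_of_le_ne_top (EReal.coe_ne_top _) hcv'
    set rm : ℝ := (f m).toReal with hrm
    have hem : f m = (rm : EReal) := (EReal.coe_toReal hfm_fin (hbot _)).symm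
    have h3 := H1 m
    rw [he1, hem, ← EReal.coe_add, ← EReal.coe_add, EReal.coe_le_coe_iff] at h3
    rw [hem, EReal.coe_le_coe_iff] at hcv'
    have hne' : t₁ - t₂ ≠ 0 := sub_ne_zero.mpr hne
    have hvpos : (0:ℝ) < (t₁ - t₂) ^ 2 := by positivity
    rw [hm] at h3
    nlinarith [h3, hcv', e1, e2, hvpos]
  intro x
  set s₀ : ℝ := (inner ℝ a x : ℝ) with hs0
  have hiter : ∀ n : ℕ, (inner ℝ a (T^[n] x) : ℝ) = p^[n] s₀ ∧
      T^[n] x = x + (p^[n] s₀ - s₀) • a := by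
    intro n
    induction n with
    | zero => constructor <;> simp [hs0]
    | succ n ih =>
      obtain ⟨ih1, ih2⟩ := ih
      have hTn : T^[n+1] x = T (T^[n] x) := Function.iterate_succ_apply' T n x
      have hin : (inner ℝ a (T^[n+1] x) : ℝ) = p^[n+1] s₀ := by
        rw [hTn, hpx (T^[n] x), ih1, ← Function.iterate_succ_apply' p]
      refine ⟨hin, ?_⟩
      rw [hTn, hK1 (T^[n] x), ← hTn, hin, ih1, ih2, Function.iterate_succ_apply' p]
      rw [add_assoc, ← add_smul]
      congr 2
      ring
  have hmain := aux_main f p hproper hbot hconv hnomin hlsc hPp s₀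
  set v : X := x - s₀ • a with hv
  have hrepr : ∀ n : ℕ, T^[n] x = v + (p^[n] s₀) • a := by
    intro n
    rw [(hiter n).2, hv, sub_smul]
    abel
  rcases hmain with hup | hdown
  · obtain ⟨h1, h2⟩ := geomlim a v ha (fun n => p^[n] s₀) hup
    constructor
    · filter_upwards [h1] with n hn
      rw [hrepr n]; exact hn
    · exact ⟨a, Or.inl rfl, Tendsto.congr (fun n => by rw [hrepr n]) h2⟩
  · have hup' : Tendsto (fun n : ℕ => -(p^[n] s₀)) atTop atTop := by
      have h0 := tendsto_neg_atBot_atTop.comp hdown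
      exact h0.congr (fun n => rfl)
    obtain ⟨h1, h2⟩ := geomlim (-a) v (by rw [norm_neg, ha]) (fun n => -(p^[n] s₀)) hup'
    have hrepr' : ∀ n : ℕ, T^[n] x = v + (-(p^[n] s₀)) • (-a) := by
      intro n
      rw [hrepr n, smul_neg, neg_smul, neg_neg]
    constructor
    · filter_upwards [h1] with n hn
      rw [hrepr' n]; exact hn
    · exact ⟨-a, Or.inr rfl, Tendsto.congr (fun n => by rw [hrepr' n]) h2⟩
end
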